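/- For real a with |a| < 1 (in particular a = 1/2) and k ∈ (0,1), the generalized complete elliptic integral K_a(k) = (π/2) · ₂F₁(a, 1−a, 1, k²) satisfies K_a(k) < (π/2)(1 − (sin(πa)/π) log(1 − k²)); specializing to a = 1/2 gives K(k) < (π/2)(1 − (1/π) log(1 − k²)). -/

import Mathlib

open Real

/-- The Gauss hypergeometric function ₂F₁(a, b, c, x) for real parameters,
defined by its power series. -/
noncomputable def gaussHypergeom (a b c x : ℝ) : ℝ :=
  ∑' n : ℕ, ((ascPochhammer ℝ n).eval a * (ascPochhammer ℝ n).eval b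
      / (ascPochhammer ℝ n).eval c) * x ^ n / (n.factorial : ℝ)

/-- The generalized complete elliptic integral of the first kind,
`K_a(k) = (π/2) · ₂F₁(a, 1 - a, 1, k²)`. -/
noncomputable def genEllipticK (a k : ℝ) : ℝ :=
  (π / 2) * gaussHypergeom a (1 - a) 1 (k ^ 2)

/-- The complete elliptic integral of the first kind. -/
noncomputable def ellipticK (k : ℝ) : ℝ :=
  ∫ θ in (0 : ℝ)..(π / 2), 1 / Real.sqrt (1 - k ^ 2 * Real.sin θ ^ 2)


set_option maxHeartbeats 2000000

section EKproof

open Real Filter Finset Topology MeasureTheory intervalIntegral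
open scoped ENNReal NNReal

namespace EK

/-- Series coefficient of ₂F₁(a, 1-a; 1; ·). -/
noncomputable def c (a : ℝ) (n : ℕ) : ℝ :=
  ∏ j ∈ Finset.range n, ((a + j) * (1 - a + j) / ((j : ℝ) + 1) ^ 2)

lemma asc_eval_eq_prod (a : ℝ) (n : ℕ) :
    (ascPochhammer ℝ n).eval a = ∏ j ∈ Finset.range n, (a + j) := by
  induction n with
  | zero => simp
  | succ n ih => rw [ascPochhammer_succ_eval, ih, Finset.prod_range_succ]

lemma asc_eval_one (n : ℕ) : (ascPochhammer ℝ n).eval 1 = (n.factorial : ℝ) := by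
  rw [asc_eval_eq_prod]
  induction n with
  | zero => simp
  | succ n ih => rw [Finset.prod_range_succ, ih, Nat.factorial_succ]; push_cast; ring

lemma prod_j_add_one (n : ℕ) : ∏ j ∈ Finset.range n, ((j : ℝ) + 1) = (n.factorial : ℝ) := by
  induction n with
  | zero => simp
  | succ n ih => rw [Finset.prod_range_succ, ih, Nat.factorial_succ]; push_cast; ring

lemma c_zero (a : ℝ) : c a 0 = 1 := by simp [c]

lemma c_succ (a : ℝ) (n : ℕ) :
    c a (n + 1) = c a n * ((a + n) * (1 - a + n) / ((n : ℝ) + 1) ^ 2) :=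
  Finset.prod_range_succ _ _

lemma c_pos {a : ℝ} (ha : a ∈ Set.Ioo (0 : ℝ) 1) (n : ℕ) : 0 < c a n := by
  refine Finset.prod_pos fun j _ => ?_
  have h1 : (0 : ℝ) < a + j := add_pos_of_pos_of_nonneg ha.1 (Nat.cast_nonneg j)
  have h2 : (0 : ℝ) < 1 - a + j :=
    add_pos_of_pos_of_nonneg (by linarith [ha.2]) (Nat.cast_nonneg j)
  exact div_pos (mul_pos h1 h2) (by positivity)

lemma c_le_one {a : ℝ} (ha : a ∈ Set.Ioo (0 : ℝ) 1) (n : ℕ) : c a n ≤ 1 := by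
  refine Finset.prod_le_one (fun j _ => ?_) (fun j _ => ?_)
  · have h1 : (0 : ℝ) < a + j := add_pos_of_pos_of_nonneg ha.1 (Nat.cast_nonneg j)
    have h2 : (0 : ℝ) < 1 - a + j :=
      add_pos_of_pos_of_nonneg (by linarith [ha.2]) (Nat.cast_nonneg j)
    positivity
  · rw [div_le_one (by positivity)]
    have hj : (0:ℝ) ≤ j := Nat.cast_nonneg j
    nlinarith [ha.1, ha.2, hj]

lemma term_eq (a x : ℝ) (n : ℕ) :
    ((ascPochhammer ℝ n).eval a * (ascPochhammer ℝ n).eval (1 - a)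
        / (ascPochhammer ℝ n).eval 1) * x ^ n / (n.factorial : ℝ) = c a n * x ^ n := by
  have hf : (n.factorial : ℝ) ≠ 0 := Nat.cast_ne_zero.2 n.factorial_ne_zero
  have hc : c a n = (ascPochhammer ℝ n).eval a * (ascPochhammer ℝ n).eval (1 - a)
      / (n.factorial : ℝ) ^ 2 := by
    rw [c, asc_eval_eq_prod, asc_eval_eq_prod, ← prod_j_add_one n]
    rw [← Finset.prod_pow, ← Finset.prod_mul_distrib, ← Finset.prod_div_distrib]
  rw [hc, asc_eval_one]
  ring

lemma d_succ (a : ℝ) (n : ℕ) :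
    ((n : ℝ) + 1) * c a (n + 1) = (n : ℝ) * c a n + c a n * (a * (1 - a)) / ((n : ℝ) + 1) := by
  rw [c_succ]
  have hn : ((n : ℝ) + 1) ≠ 0 := by positivity
  field_simp
  ring

lemma d_strictMono {a : ℝ} (ha : a ∈ Set.Ioo (0 : ℝ) 1) (n : ℕ) :
    (n : ℝ) * c a n < ((n : ℝ) + 1) * c a (n + 1) := by
  rw [d_succ]
  have h : 0 < c a n * (a * (1 - a)) / ((n : ℝ) + 1) := by
    have := c_pos ha n
    have h1 := ha.1
    have h2 : (0:ℝ) < 1 - a := by linarith [ha.2]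
    positivity
  linarith

lemma d_tendsto {a : ℝ} (ha : a ∈ Set.Ioo (0 : ℝ) 1) :
    Tendsto (fun n : ℕ => (n : ℝ) * c a n) atTop (𝓝 (Real.sin (π * a) / π)) := by
  have h0 := ha.1
  have h1 : (0:ℝ) < 1 - a := by linarith [ha.2]
  have hGa : 0 < Real.Gamma a := Real.Gamma_pos_of_pos h0
  have hGb : 0 < Real.Gamma (1 - a) := Real.Gamma_pos_of_pos h1
  have key : ∀ n : ℕ, n ≠ 0 → (n : ℝ) * c a n
      = ((n : ℝ) / ((n : ℝ) + a)) * ((n : ℝ) / ((n : ℝ) + (1 - a)))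
        * ((Real.GammaSeq a n)⁻¹ * (Real.GammaSeq (1 - a) n)⁻¹) := by
    intro n hn
    have hnp : (0:ℝ) < n := by exact_mod_cast Nat.pos_of_ne_zero hn
    have hPa : (0:ℝ) < ∏ j ∈ Finset.range n, (a + j) :=
      Finset.prod_pos fun j _ => add_pos_of_pos_of_nonneg h0 (Nat.cast_nonneg j)
    have hPb : (0:ℝ) < ∏ j ∈ Finset.range n, (1 - a + j) :=
      Finset.prod_pos fun j _ => add_pos_of_pos_of_nonneg h1 (Nat.cast_nonneg j)
    have hfac : (0:ℝ) < (n.factorial : ℝ) := by exact_mod_cast n.factorial_pos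
    have hc : c a n = (∏ j ∈ Finset.range n, (a + j)) * (∏ j ∈ Finset.range n, (1 - a + j))
        / (n.factorial : ℝ) ^ 2 := by
      rw [c, ← prod_j_add_one n, ← Finset.prod_pow, ← Finset.prod_mul_distrib,
        ← Finset.prod_div_distrib]
    have hGSa : Real.GammaSeq a n = (n : ℝ) ^ (a : ℝ) * (n.factorial : ℝ)
        / ((∏ j ∈ Finset.range n, (a + j)) * (a + n)) := by
      rw [Real.GammaSeq, Finset.prod_range_succ]
    have hGSb : Real.GammaSeq (1 - a) n = (n : ℝ) ^ ((1 - a) : ℝ) * (n.factorial : ℝ)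
        / ((∏ j ∈ Finset.range n, (1 - a + j)) * (1 - a + n)) := by
      rw [Real.GammaSeq, Finset.prod_range_succ]
    have hrp : (n : ℝ) ^ (a : ℝ) * (n : ℝ) ^ ((1 - a) : ℝ) = (n : ℝ) := by
      rw [← Real.rpow_add hnp]; norm_num
    have hra : (0:ℝ) < (n : ℝ) ^ (a : ℝ) := Real.rpow_pos_of_pos hnp _
    have hrb : (0:ℝ) < (n : ℝ) ^ ((1-a) : ℝ) := Real.rpow_pos_of_pos hnp _
    have han : (0:ℝ) < a + n := by positivity
    have hbn : (0:ℝ) < 1 - a + n := by positivity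
    rw [hc, hGSa, hGSb, inv_div, inv_div, div_mul_div_comm, div_mul_div_comm]
    rw [show ((n:ℝ) ^ (a:ℝ) * (n.factorial:ℝ)) * ((n:ℝ) ^ ((1-a):ℝ) * (n.factorial:ℝ))
        = (n : ℝ) * (n.factorial : ℝ)^2 by rw [sq]; nlinarith [hrp]]
    rw [div_mul_div_comm, eq_div_iff (by positivity)]
    field_simp
    ring
  have hlim : Tendsto (fun n : ℕ => ((n : ℝ) / ((n : ℝ) + a)) * ((n : ℝ) / ((n : ℝ) + (1 - a)))
        * ((Real.GammaSeq a n)⁻¹ * (Real.GammaSeq (1 - a) n)⁻¹)) atTop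
      (𝓝 (1 * 1 * ((Real.Gamma a)⁻¹ * (Real.Gamma (1 - a))⁻¹))) := by
    exact ((tendsto_natCast_div_add_atTop a).mul
        (tendsto_natCast_div_add_atTop (1 - a))).mul
      (((Real.GammaSeq_tendsto_Gamma a).inv₀ hGa.ne').mul
        ((Real.GammaSeq_tendsto_Gamma (1 - a)).inv₀ hGb.ne'))
  have heq : 1 * 1 * ((Real.Gamma a)⁻¹ * (Real.Gamma (1 - a))⁻¹) = Real.sin (π * a) / π := by
    rw [one_mul, one_mul, ← mul_inv, Real.Gamma_mul_Gamma_one_sub, inv_div]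
  rw [← heq]
  exact Tendsto.congr' (by filter_upwards [eventually_ne_atTop 0] with n hn
    using (key n hn).symm) hlim

lemma c_lt {a : ℝ} (ha : a ∈ Set.Ioo (0 : ℝ) 1) (n : ℕ) :
    ((n : ℝ) + 1) * c a (n + 1) < Real.sin (π * a) / π := by
  have mono : Monotone (fun n : ℕ => (n : ℝ) * c a n) :=
    monotone_nat_of_le_succ fun n => by
      have := d_strictMono ha n; push_cast; linarith
  have hle := mono.ge_of_tendsto (d_tendsto ha) (n + 2)
  have h2 := d_strictMono ha (n + 1)
  push_cast at hle h2 ⊢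
  linarith

lemma summable_cx {a : ℝ} (ha : a ∈ Set.Ioo (0 : ℝ) 1) {x : ℝ} (hx : x ∈ Set.Ioo (0:ℝ) 1) :
    Summable (fun n : ℕ => c a n * x ^ n) := by
  refine Summable.of_nonneg_of_le (fun n => ?_) (fun n => ?_)
    (summable_geometric_of_lt_one hx.1.le hx.2)
  · exact mul_nonneg (c_pos ha n).le (pow_nonneg hx.1.le n)
  · have h1 := c_le_one ha n
    have h2 : (0:ℝ) ≤ x ^ n := pow_nonneg hx.1.le n
    nlinarith

lemma tsum_lt_main {a : ℝ} (ha : a ∈ Set.Ioo (0 : ℝ) 1) {x : ℝ} (hx : x ∈ Set.Ioo (0:ℝ) 1) :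
    ∑' n : ℕ, c a n * x ^ n < 1 - (Real.sin (π * a) / π) * Real.log (1 - x) := by
  have hπ := Real.pi_pos
  have hxabs : |x| < 1 := by rw [abs_lt]; constructor <;> linarith [hx.1, hx.2]
  have hlog : HasSum (fun n : ℕ => Real.sin (π * a) / π * (x ^ (n + 1) / ((n:ℝ) + 1)))
      (Real.sin (π * a) / π * (-Real.log (1 - x))) :=
    (Real.hasSum_pow_div_log_of_abs_lt_one hxabs).mul_left (Real.sin (π * a) / π)
  have hsum := summable_cx ha hx
  have hshift : Summable (fun n : ℕ => c a (n + 1) * x ^ (n + 1)) :=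
    (summable_nat_add_iff 1).2 hsum
  have bound : ∀ n : ℕ, c a (n + 1) * x ^ (n + 1) ≤ Real.sin (π * a) / π * (x ^ (n + 1) / ((n:ℝ) + 1)) := by
    intro n
    have hn1 : (0:ℝ) < (n:ℝ) + 1 := by positivity
    have hxp : (0:ℝ) < x ^ (n + 1) := pow_pos hx.1 _
    have h2 : c a (n + 1) ≤ Real.sin (π * a) / π / ((n:ℝ) + 1) := by
      rw [le_div_iff₀ hn1, mul_comm]
      exact (c_lt ha n).le
    calc c a (n + 1) * x ^ (n + 1) ≤ Real.sin (π * a) / π / ((n:ℝ) + 1) * x ^ (n + 1) :=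
          mul_le_mul_of_nonneg_right h2 hxp.le
      _ = Real.sin (π * a) / π * (x ^ (n + 1) / ((n:ℝ) + 1)) := by ring
  have strict : c a (0 + 1) * x ^ (0 + 1) < Real.sin (π * a) / π * (x ^ (0 + 1) / (((0:ℕ):ℝ) + 1)) := by
    have h1 := c_lt ha 0
    have hxp : (0:ℝ) < x ^ 1 := pow_pos hx.1 _
    simp only [Nat.cast_zero, zero_add, pow_one, one_mul] at h1 ⊢
    rw [div_one]
    nlinarith
  have hlt := Summable.tsum_lt_tsum bound strict hshift hlog.summable
  have h0 : ∑' n : ℕ, c a n * x ^ n = 1 + ∑' n : ℕ, c a (n + 1) * x ^ (n + 1) := by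
    rw [Summable.tsum_eq_zero_add hsum, c_zero]
    norm_num
  rw [h0]
  have := hlog.tsum_eq
  linarith [hlt, this]

/-- `b n = ∏_{j<n} (2j+1)/(2j+2)`, the coefficients of `(1-y)^{-1/2}`. -/
noncomputable def b (n : ℕ) : ℝ :=
  ∏ j ∈ Finset.range n, ((2 * (j:ℝ) + 1) / (2 * j + 2))

lemma b_zero : b 0 = 1 := by simp [b]

lemma b_succ (n : ℕ) : b (n + 1) = b n * ((2 * (n:ℝ) + 1) / (2 * n + 2)) :=
  Finset.prod_range_succ _ _

lemma b_pos (n : ℕ) : 0 < b n :=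
  Finset.prod_pos fun j _ => by positivity

lemma b_le_one (n : ℕ) : b n ≤ 1 := by
  refine Finset.prod_le_one (fun j _ => by positivity) (fun j _ => ?_)
  rw [div_le_one (by positivity)]
  linarith

lemma b_rec (n : ℕ) : ((n:ℝ) + 1) * b (n + 1) = ((n:ℝ) + 1 / 2) * b n := by
  rw [b_succ]
  have h : (2 * (n:ℝ) + 2) ≠ 0 := by positivity
  field_simp

/-- The key convolution identity `∑_{i+j=n} b i * b j = 1`. -/
lemma b_conv (n : ℕ) : ∑ p ∈ Finset.HasAntidiagonal.antidiagonal n, b p.1 * b p.2 = 1 := by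
  induction n with
  | zero => simp [b_zero]
  | succ n ih =>
    -- symmetry: ∑ p.1 * (b p.1 * b p.2) = ∑ p.2 * (b p.1 * b p.2)
    have sym : ∀ m : ℕ, ∑ p ∈ Finset.HasAntidiagonal.antidiagonal m, (p.1 : ℝ) * (b p.1 * b p.2)
        = ∑ p ∈ Finset.HasAntidiagonal.antidiagonal m, (p.2 : ℝ) * (b p.1 * b p.2) := by
      intro m
      rw [← Finset.HasAntidiagonal.map_swap_antidiagonal (n := m), Finset.sum_map]
      simp [mul_comm]
    -- hence 2 * ∑ p.1 * bb = m * A m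
    have twice : ∀ m : ℕ, 2 * ∑ p ∈ Finset.HasAntidiagonal.antidiagonal m, (p.1 : ℝ) * (b p.1 * b p.2)
        = (m : ℝ) * ∑ p ∈ Finset.HasAntidiagonal.antidiagonal m, b p.1 * b p.2 := by
      intro m
      rw [two_mul]
      nth_rewrite 2 [sym m]
      rw [← Finset.sum_add_distrib, Finset.mul_sum]
      refine Finset.sum_congr rfl fun p hp => ?_
      have hpm : p.1 + p.2 = m := Finset.HasAntidiagonal.mem_antidiagonal.1 hp
      have hcast : (p.1 : ℝ) + (p.2 : ℝ) = (m : ℝ) := by exact_mod_cast congrArg Nat.cast hpm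
      linear_combination (b p.1 * b p.2) * hcast
    -- shift identity
    have shift : ∑ p ∈ Finset.HasAntidiagonal.antidiagonal (n + 1), (p.1 : ℝ) * (b p.1 * b p.2)
        = ∑ p ∈ Finset.HasAntidiagonal.antidiagonal n, ((p.1 : ℝ) + 1 / 2) * (b p.1 * b p.2) := by
      rw [Finset.Nat.antidiagonal_succ, Finset.sum_cons, Finset.sum_map]
      simp only [Nat.cast_zero, zero_mul, zero_add]
      refine Finset.sum_congr rfl fun p hp => ?_
      simp only [Function.Embedding.prodMap, Function.Embedding.coeFn_mk, Prod.map,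
        Function.Embedding.refl_apply, Nat.succ_eq_add_one]
      push_cast
      linear_combination (b p.2) * b_rec p.1
    have h2 : 2 * ∑ p ∈ Finset.HasAntidiagonal.antidiagonal (n+1), (p.1 : ℝ) * (b p.1 * b p.2)
        = ((n:ℝ) + 1) * ∑ p ∈ Finset.HasAntidiagonal.antidiagonal (n+1), b p.1 * b p.2 := by
      have := twice (n + 1); push_cast at this ⊢; linarith
    rw [shift] at h2
    have h3 : ∑ p ∈ Finset.HasAntidiagonal.antidiagonal n, ((p.1 : ℝ) + 1 / 2) * (b p.1 * b p.2)
        = ∑ p ∈ Finset.HasAntidiagonal.antidiagonal n, (p.1 : ℝ) * (b p.1 * b p.2)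
          + (1 / 2) * ∑ p ∈ Finset.HasAntidiagonal.antidiagonal n, b p.1 * b p.2 := by
      rw [Finset.mul_sum, ← Finset.sum_add_distrib]
      exact Finset.sum_congr rfl fun p _ => by ring
    rw [h3, ih] at h2
    have h4 := twice n
    rw [ih] at h4
    have hn1 : ((n:ℝ) + 1) ≠ 0 := by positivity
    field_simp at h2 ⊢
    simp only [← mul_assoc] at h4
    nlinarith [h2, h4, (by positivity : (0:ℝ) < n + 1)]

lemma summable_by {y : ℝ} (h0 : 0 ≤ y) (h1 : y < 1) : Summable (fun n : ℕ => b n * y ^ n) := by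
  refine Summable.of_nonneg_of_le (fun n => ?_) (fun n => ?_)
    (summable_geometric_of_lt_one h0 h1)
  · exact mul_nonneg (b_pos n).le (pow_nonneg h0 n)
  · have := b_le_one n
    have h2 : (0:ℝ) ≤ y ^ n := pow_nonneg h0 n
    nlinarith

lemma hasSum_invSqrt {y : ℝ} (h0 : 0 ≤ y) (h1 : y < 1) :
    HasSum (fun n : ℕ => b n * y ^ n) (1 / Real.sqrt (1 - y)) := by
  have hsum := summable_by h0 h1
  set S := ∑' n : ℕ, b n * y ^ n with hS
  have hprod : Summable (fun p : ℕ × ℕ => (b p.1 * y ^ p.1) * (b p.2 * y ^ p.2)) := by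
    refine Summable.mul_of_nonneg hsum hsum (fun n => ?_) (fun n => ?_) <;>
      exact mul_nonneg (b_pos n).le (pow_nonneg h0 n)
  have hsq : S * S = ∑' n : ℕ, y ^ n := by
    rw [hS, Summable.tsum_mul_tsum_eq_tsum_sum_antidiagonal hsum hsum hprod]
    refine tsum_congr fun n => ?_
    have : ∀ p ∈ Finset.HasAntidiagonal.antidiagonal n,
        (b p.1 * y ^ p.1) * (b p.2 * y ^ p.2) = (b p.1 * b p.2) * y ^ n := by
      intro p hp
      have hpn : p.1 + p.2 = n := Finset.HasAntidiagonal.mem_antidiagonal.1 hp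
      rw [← hpn, pow_add]; ring
    rw [Finset.sum_congr rfl this, ← Finset.sum_mul, b_conv, one_mul]
  have hgeo : ∑' n : ℕ, y ^ n = (1 - y)⁻¹ := tsum_geometric_of_lt_one h0 h1
  have hSnn : 0 ≤ S := tsum_nonneg fun n => mul_nonneg (b_pos n).le (pow_nonneg h0 n)
  have h1y : (0:ℝ) < 1 - y := by linarith
  have : S = 1 / Real.sqrt (1 - y) := by
    have hs : S ^ 2 = ((1:ℝ) / Real.sqrt (1 - y)) ^ 2 := by
      rw [sq, hsq, hgeo, div_pow, one_pow, sq_sqrt h1y.le, one_div]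
    have hpos : (0:ℝ) ≤ 1 / Real.sqrt (1 - y) := by positivity
    nlinarith [hs, hSnn, hpos]
  exact this ▸ hsum.hasSum

lemma integral_sin_even (n : ℕ) :
    ∫ x in (0:ℝ)..(π/2), Real.sin x ^ (2 * n) = (π / 2) * b n := by
  induction n with
  | zero => simp [b]
  | succ n ih =>
    have h : 2 * (n + 1) = 2 * n + 2 := by ring
    rw [h, integral_sin_pow (2 * n)]
    rw [Real.sin_zero, Real.cos_pi_div_two, ih]
    rw [show b (n+1) = b n * ((2 * (n:ℝ) + 1) / (2 * n + 2)) from Finset.prod_range_succ _ _]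
    push_cast
    ring
lemma ellipticK_eq {k : ℝ} (hk : k ∈ Set.Ioo (0:ℝ) 1) :
    ellipticK k = (π / 2) * ∑' n : ℕ, (b n) ^ 2 * (k ^ 2) ^ n := by
  have hπ := Real.pi_pos
  have hk0 := hk.1
  have hk1 := hk.2
  have hk2 : k ^ 2 < 1 := by nlinarith
  have hk2nn : (0:ℝ) ≤ k ^ 2 := sq_nonneg k
  set g : ℕ → ℝ → ℝ := fun n θ => b n * (k ^ 2 * Real.sin θ ^ 2) ^ n with hg
  have hy : ∀ θ : ℝ, 0 ≤ k ^ 2 * Real.sin θ ^ 2 ∧ k ^ 2 * Real.sin θ ^ 2 < 1 := by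
    intro θ
    constructor
    · positivity
    · nlinarith [Real.sin_sq_le_one θ, sq_nonneg (Real.sin θ)]
  have hptwise : ∀ θ : ℝ, 1 / Real.sqrt (1 - k ^ 2 * Real.sin θ ^ 2) = ∑' n, g n θ := by
    intro θ
    exact (hasSum_invSqrt (hy θ).1 (hy θ).2).tsum_eq.symm
  have hle : (0:ℝ) ≤ π / 2 := by linarith
  -- bound for each term
  have hbound : ∀ n θ, ‖g n θ‖ ≤ b n * (k ^ 2) ^ n := by
    intro n θ
    have h1 : (0:ℝ) ≤ (k ^ 2 * Real.sin θ ^ 2) ^ n := pow_nonneg (hy θ).1 n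
    have h2 : (k ^ 2 * Real.sin θ ^ 2) ^ n ≤ (k ^ 2) ^ n := by
      apply pow_le_pow_left₀ (hy θ).1
      nlinarith [Real.sin_sq_le_one θ, sq_nonneg k]
    rw [hg]
    simp only [norm_mul, Real.norm_eq_abs, abs_of_nonneg (b_pos n).le, abs_of_nonneg h1]
    exact mul_le_mul_of_nonneg_left h2 (b_pos n).le
  have hsummable : Summable (fun n : ℕ => b n * (k ^ 2) ^ n * (π / 2)) :=
    ((hasSum_invSqrt hk2nn hk2).summable.mul_right _)
  have hmeas : ∀ n : ℕ, AEStronglyMeasurable (g n) (volume.restrict (Set.Ioc 0 (π/2))) := by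
    intro n
    exact ((continuous_const.mul ((continuous_const.mul
      ((Real.continuous_sin.pow 2))).pow n))).aestronglyMeasurable
  have hswap : ∫ θ in Set.Ioc (0:ℝ) (π/2), (∑' n, g n θ) ∂volume
      = ∑' n, ∫ θ in Set.Ioc (0:ℝ) (π/2), g n θ ∂volume := by
    refine MeasureTheory.integral_tsum hmeas ?_
    have hbnd : ∀ n : ℕ, (∫⁻ θ in Set.Ioc (0:ℝ) (π/2), ‖g n θ‖₊ ∂volume)
        ≤ ENNReal.ofReal (b n * (k ^ 2) ^ n * (π / 2)) := by
      intro n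
      calc ∫⁻ θ in Set.Ioc (0:ℝ) (π/2), (‖g n θ‖₊ : ℝ≥0∞) ∂volume
          ≤ ∫⁻ _ in Set.Ioc (0:ℝ) (π/2), ENNReal.ofReal (b n * (k ^ 2) ^ n) ∂volume := by
            refine lintegral_mono fun θ => ?_
            rw [← enorm_eq_nnnorm, ← ofReal_norm]
            exact ENNReal.ofReal_le_ofReal (hbound n θ)
        _ = ENNReal.ofReal (b n * (k ^ 2) ^ n) * volume (Set.Ioc (0:ℝ) (π/2)) := by
            rw [MeasureTheory.lintegral_const, Measure.restrict_apply MeasurableSet.univ,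
              Set.univ_inter]
        _ = ENNReal.ofReal (b n * (k ^ 2) ^ n * (π / 2)) := by
            rw [Real.volume_Ioc, ← ENNReal.ofReal_mul (mul_nonneg (b_pos n).le (pow_nonneg hk2nn n))]
            norm_num
    have hfin : ∑' n, ∫⁻ θ in Set.Ioc (0:ℝ) (π/2), (‖g n θ‖₊ : ℝ≥0∞) ∂volume
        ≤ ENNReal.ofReal (∑' n, b n * (k ^ 2) ^ n * (π / 2)) := by
      calc ∑' n, ∫⁻ θ in Set.Ioc (0:ℝ) (π/2), (‖g n θ‖₊ : ℝ≥0∞) ∂volume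
          ≤ ∑' n, ENNReal.ofReal (b n * (k ^ 2) ^ n * (π / 2)) := ENNReal.tsum_le_tsum hbnd
        _ = ENNReal.ofReal (∑' n, b n * (k ^ 2) ^ n * (π / 2)) :=
            (ENNReal.ofReal_tsum_of_nonneg (fun n => mul_nonneg (mul_nonneg (b_pos n).le
              (pow_nonneg hk2nn n)) hle) hsummable).symm
    exact (hfin.trans_lt ENNReal.ofReal_lt_top).ne
  have hterm : ∀ n : ℕ, ∫ θ in Set.Ioc (0:ℝ) (π/2), g n θ ∂volume
      = (π / 2) * ((b n) ^ 2 * (k ^ 2) ^ n) := by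
    intro n
    rw [← intervalIntegral.integral_of_le hle]
    have : ∀ θ : ℝ, g n θ = (b n * (k ^ 2) ^ n) * Real.sin θ ^ (2 * n) := by
      intro θ
      rw [hg]
      simp only
      rw [mul_pow, pow_mul]
      ring
    rw [intervalIntegral.integral_congr (fun θ _ => this θ),
      intervalIntegral.integral_const_mul, integral_sin_even]
    ring
  rw [ellipticK, intervalIntegral.integral_of_le hle]
  rw [MeasureTheory.integral_congr_ae (Eventually.of_forall fun θ => hptwise θ), hswap]
  rw [tsum_congr hterm, tsum_mul_left]

lemma b_sq (n : ℕ) : c (1/2 : ℝ) n = b n ^ 2 := by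
  rw [c, b, ← Finset.prod_pow]
  refine Finset.prod_congr rfl fun j _ => ?_
  rw [div_pow, div_eq_div_iff (by positivity) (by positivity)]
  ring

lemma main_gen {a k : ℝ} (ha : a ∈ Set.Ioo (0 : ℝ) 1) (hk : k ∈ Set.Ioo (0 : ℝ) 1) :
    genEllipticK a k < (π / 2) * (1 - (Real.sin (π * a) / π) * Real.log (1 - k ^ 2)) := by
  have hx : k ^ 2 ∈ Set.Ioo (0:ℝ) 1 := by
    exact ⟨pow_pos hk.1 2, by nlinarith [hk.1, hk.2]⟩
  have hgh : gaussHypergeom a (1 - a) 1 (k ^ 2) = ∑' n : ℕ, c a n * (k ^ 2) ^ n :=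
    tsum_congr fun n => term_eq a (k ^ 2) n
  rw [genEllipticK, hgh]
  have := tsum_lt_main ha hx
  have hπ : (0:ℝ) < π / 2 := by positivity
  nlinarith [this]

end EK

end EKproof

theorem genEllipticK_lt (a k : ℝ) (ha : a ∈ Set.Ioo (0 : ℝ) 1)
    (hk : k ∈ Set.Ioo (0 : ℝ) 1) :
    genEllipticK a k < (π / 2) * (1 - (Real.sin (π * a) / π) * Real.log (1 - k ^ 2))
      ∧ ellipticK k < (π / 2) * (1 - (1 / π) * Real.log (1 - k ^ 2)) := by
  constructor
  · exact EK.main_gen ha hk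
  · have h2 : ellipticK k = genEllipticK (1/2 : ℝ) k := by
      rw [EK.ellipticK_eq hk, genEllipticK]
      have hgh : gaussHypergeom (1/2 : ℝ) (1 - 1/2) 1 (k ^ 2)
          = ∑' n : ℕ, EK.c (1/2 : ℝ) n * (k ^ 2) ^ n :=
        tsum_congr fun n => EK.term_eq (1/2 : ℝ) (k ^ 2) n
      rw [hgh]
      congr 1
      exact tsum_congr fun n => by rw [EK.b_sq]
    have hha : (1/2 : ℝ) ∈ Set.Ioo (0:ℝ) 1 := by norm_num
    have := EK.main_gen hha hk
    rw [h2]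
    have hs : Real.sin (π * (1/2)) = 1 := by
      rw [show π * (1/2 : ℝ) = π / 2 by ring, Real.sin_pi_div_two]
    rw [hs] at this
    simpa using this
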